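/- Let p be an odd prime, n = (p-1)/2, and ζ = e^{2πi/p}. Then ∏_{j=1}^{n} (1 + ζ^{2j}) = ζ^{n(n+1)/2} · (2/p), where (2/p) is the Legendre symbol of 2 modulo p. -/

import Mathlib

open Finset Complex Polynomial

lemma aux_prod_one_add {n : ℕ} (hn : Even n) {μ : ℂ} (hμ : IsPrimitiveRoot μ (n + 1)) :
    ∏ k ∈ range n, (1 + μ ^ (k + 1)) = 1 := by
  have h := X_pow_sub_C_eq_prod hμ n.zero_lt_succ (one_pow (n + 1))
  apply_fun Polynomial.eval (-1 : ℂ) at h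
  simp only [eval_sub, eval_pow, eval_X, eval_C, eval_prod, mul_one] at h
  rw [Odd.neg_one_pow hn.add_one, Finset.prod_range_succ', pow_zero] at h
  have h2 : (∏ i ∈ range n, (-1 - μ ^ (i + 1))) = 1 := by
    have hne : (-1 - 1 : ℂ) ≠ 0 := by norm_num
    have : (∏ i ∈ range n, (-1 - μ ^ (i + 1))) * (-1 - 1) = 1 * (-1 - 1) := by
      rw [← h]; ring
    exact mul_right_cancel₀ hne this
  calc ∏ k ∈ range n, (1 + μ ^ (k+1)) = ∏ k ∈ range n, (-1) * (-1 - μ ^ (k+1)) := by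
        refine Finset.prod_congr rfl fun k _ => by ring
    _ = (-1)^n * ∏ k ∈ range n, (-1 - μ ^ (k+1)) := by
        rw [Finset.prod_mul_distrib, prod_const, card_range]
    _ = 1 := by rw [h2, hn.neg_one_pow, mul_one]

lemma sum_Icc_one (m : ℕ) : ∑ j ∈ Icc 1 m, j = m * (m + 1) / 2 := by
  induction m with
  | zero => simp
  | succ k ih =>
    rw [← Finset.Ico_add_one_right_eq_Icc, Finset.sum_Ico_succ_top (by omega), Finset.Ico_add_one_right_eq_Icc, ih]
    have h1 : (k+1)*(k+1+1) = k*(k+1) + (k+1)*2 := by ring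
    omega

theorem prod_one_add_zeta (p : ℕ) [Fact p.Prime] (hp : p ≠ 2) :
    let n := (p - 1) / 2
    let ζ : ℂ := Complex.exp (2 * Real.pi * Complex.I / p)
    ∏ j ∈ Icc 1 n, (1 + ζ ^ (2 * j)) = ζ ^ (n * (n + 1) / 2) * legendreSym p 2 := by
  intro n ζ
  have hp' : p.Prime := Fact.out
  have hodd : p % 2 = 1 := Nat.odd_iff.mp (hp'.odd_of_ne_two hp)
  have hple : 2 ≤ p := hp'.two_le
  have hn : n = (p - 1) / 2 := rfl
  have hn2 : 2 * n + 1 = p := by omega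
  have hp0 : (0:ℝ) < p := by positivity
  have hπ := Real.pi_pos
  have hprim : IsPrimitiveRoot ζ p := Complex.isPrimitiveRoot_exp p hp'.ne_zero
  -- ζ^j as exp of real multiple of I
  have hzj : ∀ j : ℕ, ζ ^ j = Complex.exp ((2 * Real.pi * j / p : ℝ) * I) := by
    intro j
    rw [show ζ = Complex.exp (2 * Real.pi * Complex.I / p) from rfl, ← Complex.exp_nat_mul]
    congr 1
    push_cast
    have : (p:ℂ) ≠ 0 := by exact_mod_cast (by positivity : (p:ℝ) ≠ 0)
    field_simp
  set c : ℕ → ℝ := fun j => 2 * Real.cos (2 * Real.pi * j / p) with hc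
  have key : ∀ j : ℕ, 1 + ζ ^ (2 * j) = ζ ^ j * ((c j : ℝ) : ℂ) := by
    intro j
    have h1 : ζ ^ (2 * j) = (ζ ^ j) ^ 2 := by rw [mul_comm, pow_mul]
    rw [h1, hzj j]
    set θ : ℝ := 2 * Real.pi * j / p with hθ
    show 1 + (Complex.exp ((θ:ℂ) * I))^2 = Complex.exp ((θ:ℂ) * I) * ((2 * Real.cos θ : ℝ) : ℂ)
    rw [Complex.ofReal_mul, Complex.ofReal_ofNat, Complex.ofReal_cos]
    have h2 : Complex.exp ((θ:ℂ) * I) * Complex.exp (-(θ:ℂ) * I) = 1 := by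
      rw [← Complex.exp_add]
      ring_nf
      exact Complex.exp_zero
    have h3 := Complex.two_cos (x := (θ:ℂ))
    linear_combination (-Complex.exp ((θ:ℂ)*I)) * h3 - h2
  have habs : ∀ j : ℕ, ‖ζ ^ j‖ = 1 := fun j => by
    rw [hzj]; exact Complex.norm_exp_ofReal_mul_I _
  -- full product over 1..p-1
  have hfull : ∏ k ∈ Icc 1 (p-1), (1 + ζ ^ k) = 1 := by
    have heven : Even (p - 1) := Nat.even_iff.mpr (by omega)
    have hprim' : IsPrimitiveRoot ζ (p - 1 + 1) := by
      rw [show p - 1 + 1 = p by omega]; exact hprim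
    have h := aux_prod_one_add heven hprim'
    rw [← Finset.Ico_add_one_right_eq_Icc, show p - 1 + 1 = p by omega,
      show (1:ℕ) = p - (p-1) by omega, Finset.prod_Ico_eq_prod_range]
    rw [show p - (p - (p-1)) = p - 1 by omega]
    refine (Finset.prod_congr rfl fun i _ => ?_).trans h
    rw [show p - (p-1) + i = i + 1 by omega]
  -- splitting of Icc 1 (p-1)
  have hsplit : Icc 1 (p-1) =
      ((Icc 1 n).image (fun j => 2*j)) ∪ ((Icc 1 n).image (fun j => p - 2*j)) := by
    ext a
    simp only [mem_union, mem_image, mem_Icc]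
    constructor
    · rintro ⟨h1, h2⟩
      rcases Nat.even_or_odd a with ⟨t, ht⟩ | ⟨t, ht⟩
      · exact Or.inl ⟨t, by omega, show 2*t = a by omega⟩
      · exact Or.inr ⟨(p - a)/2, by omega, show p - 2*((p-a)/2) = a by omega⟩
    · rintro (⟨j, hj, rfl⟩ | ⟨j, hj, rfl⟩)
      · show 1 ≤ 2*j ∧ 2*j ≤ p-1
        omega
      · show 1 ≤ p-2*j ∧ p-2*j ≤ p-1
        omega
  have hdisj : Disjoint ((Icc 1 n).image (fun j => 2*j)) ((Icc 1 n).image (fun j => p - 2*j)) := by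
    rw [Finset.disjoint_left]
    rintro a ha hb
    simp only [mem_image, mem_Icc] at ha hb
    obtain ⟨j, hj, rfl⟩ := ha
    obtain ⟨k, hk, hk2⟩ := hb
    omega
  have h2inj : Set.InjOn (fun j => 2*j) (Icc 1 n) := by
    intro a _ b _ h
    have h' : 2*a = 2*b := h
    omega
  have hpinj : Set.InjOn (fun j => p - 2*j) (Icc 1 n) := by
    intro a ha b hb h
    simp only [Finset.coe_Icc, Set.mem_Icc] at ha hb
    have h' : p - 2*a = p - 2*b := h
    omega
  -- |product| pieces
  have e1 : ∀ j ∈ Icc 1 n, ‖1 + ζ^(2*j)‖ = |c j| := by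
    intro j _
    rw [key j, norm_mul, habs, one_mul, Complex.norm_real, Real.norm_eq_abs]
  have e2 : ∀ j ∈ Icc 1 n, ‖1 + ζ^(p - 2*j)‖ = |c j| := by
    intro j hj
    have hj' := hj
    simp only [mem_Icc] at hj'
    have h2j : 2*j ≤ p := by omega
    have hu : ζ ^ (2*j) ≠ 0 := by
      intro h0
      have := habs (2*j)
      rw [h0] at this
      simp at this
    have hzz : ζ ^ (p - 2*j) = (starRingEnd ℂ) (ζ ^ (2*j)) := by
      have hmul : ζ ^ (p - 2*j) * ζ ^ (2*j) = 1 := by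
        rw [← pow_add, Nat.sub_add_cancel h2j, hprim.pow_eq_one]
      have hconj : (starRingEnd ℂ) (ζ ^ (2*j)) * ζ ^ (2*j) = 1 := by
        rw [mul_comm, Complex.mul_conj, Complex.normSq_eq_norm_sq, habs]
        norm_num
      exact mul_right_cancel₀ hu (hmul.trans hconj.symm)
    rw [hzz, show (1:ℂ) + (starRingEnd ℂ) (ζ^(2*j)) = (starRingEnd ℂ) (1 + ζ^(2*j)) by
      rw [map_add, map_one], Complex.norm_conj]
    exact e1 j hj
  -- A = 1
  have hA : ∏ j ∈ Icc 1 n, |c j| = 1 := by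
    have h1 : ∏ k ∈ Icc 1 (p-1), ‖1 + ζ ^ k‖ = 1 := by
      rw [← Complex.norm_prod, hfull, norm_one]
    rw [hsplit, Finset.prod_union hdisj, Finset.prod_image (fun a ha b hb h => h2inj ha hb h),
      Finset.prod_image (fun a ha b hb h => hpinj ha hb h)] at h1
    rw [Finset.prod_congr rfl e1, Finset.prod_congr rfl e2] at h1
    have hA0 : (0:ℝ) ≤ ∏ j ∈ Icc 1 n, |c j| := Finset.prod_nonneg fun j _ => abs_nonneg _
    rcases mul_self_eq_one_iff.mp h1 with h | h
    · exact h
    · linarith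
  -- sign
  have hsign : ∏ j ∈ Icc 1 n, c j = (-1 : ℝ) ^ (#{j ∈ Icc 1 n | c j < 0}) := by
    calc ∏ j ∈ Icc 1 n, c j
        = ∏ j ∈ Icc 1 n, ((if c j < 0 then (-1:ℝ) else 1) * |c j|) := by
          refine Finset.prod_congr rfl fun j _ => ?_
          split_ifs with h
          · rw [_root_.abs_of_nonpos h.le]; ring
          · rw [_root_.abs_of_nonneg (not_lt.mp h), one_mul]
      _ = (∏ j ∈ Icc 1 n, if c j < 0 then (-1:ℝ) else 1) * ∏ j ∈ Icc 1 n, |c j| :=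
          Finset.prod_mul_distrib
      _ = (-1 : ℝ) ^ (#{j ∈ Icc 1 n | c j < 0}) := by
          rw [hA, mul_one, Finset.prod_ite, Finset.prod_const, Finset.prod_const, one_pow, mul_one]
  -- Gauss lemma
  have h2ne : ((2:ℤ) : ZMod p) ≠ 0 := by
    intro h0
    have : ((2:ℕ) : ZMod p) = 0 := by exact_mod_cast h0
    rw [ZMod.natCast_eq_zero_iff] at this
    have := Nat.le_of_dvd (by norm_num) this
    interval_cases p <;> simp_all
  have hgauss := ZMod.gauss_lemma hp h2ne
  have hcard : #{x ∈ Ico 1 (p / 2).succ | p / 2 < ((2 : ℤ) * (x : ℕ) : ZMod p).val}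
      = #{j ∈ Icc 1 n | c j < 0} := by
    have hIcc : Ico 1 (p / 2).succ = Icc 1 n := by
      rw [Nat.succ_eq_add_one, Finset.Ico_add_one_right_eq_Icc]
      congr 1
      omega
    rw [hIcc]
    congr 1
    refine Finset.filter_congr fun j hj => ?_
    simp only [mem_Icc] at hj
    have hval : (((2 : ℤ) * (j : ℕ) : ZMod p)).val = 2 * j := by
      have h1 : ((2 * j : ℕ) : ZMod p).val = 2*j := ZMod.val_cast_of_lt (by omega)
      rw [← h1]
      congr 1
      push_cast
      ring
    rw [hval]
    constructor
    · intro h4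
      have hlt : (p:ℝ) < 4*j := by exact_mod_cast (by omega : p < 4*j)
      have hub : (2*j:ℝ) < p := by exact_mod_cast (by omega : 2*j < p)
      have hx1 : Real.pi/2 < 2*Real.pi*j/p := by
        rw [lt_div_iff₀ hp0]; nlinarith
      have hx2 : 2*Real.pi*j/p < Real.pi + Real.pi/2 := by
        rw [div_lt_iff₀ hp0]; nlinarith
      have := Real.cos_neg_of_pi_div_two_lt_of_lt hx1 hx2
      simp only [hc]
      linarith
    · intro h4
      by_contra hle
      have h4j : (4*j:ℝ) ≤ p := by exact_mod_cast (by omega : 4*j ≤ p)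
      have hx2 : 2*Real.pi*j/p ≤ Real.pi/2 := by
        rw [div_le_iff₀ hp0]; nlinarith
      have hx1 : -(Real.pi/2) ≤ 2*Real.pi*j/p := by
        have h0 : (0:ℝ) ≤ 2*Real.pi*j/p := by positivity
        linarith
      have hge := Real.cos_nonneg_of_mem_Icc ⟨hx1, hx2⟩
      simp only [hc] at h4
      linarith
  -- assemble
  have hsum : ∑ j ∈ Icc 1 n, j = n * (n + 1) / 2 := sum_Icc_one n
  calc ∏ j ∈ Icc 1 n, (1 + ζ ^ (2*j))
      = ∏ j ∈ Icc 1 n, (ζ ^ j * ((c j : ℝ) : ℂ)) := Finset.prod_congr rfl fun j _ => key j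
    _ = ζ ^ (n * (n + 1) / 2) * ((∏ j ∈ Icc 1 n, c j : ℝ) : ℂ) := by
        rw [Finset.prod_mul_distrib, Finset.prod_pow_eq_pow_sum, hsum, Complex.ofReal_prod]
    _ = ζ ^ (n * (n + 1) / 2) * (legendreSym p 2 : ℂ) := by
        rw [hsign, hgauss, hcard]
        push_cast
        ring
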